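/- For ő≤ < 0 and x ‚Č• 0, ‚ąę_0^‚ąě y e^{ő≤ y} dy = 1/ő≤¬≤, and consequently (1/‚ąö(2ŌÄt)) ‚ąę_0^‚ąě (exp(-(x-y)¬≤/(2t)) - exp(-(x+y)¬≤/(2t))) e^{ő≤y} dy ‚Č§ ‚ąö(2/(ŌÄt¬≥)) ¬∑ x/ő≤¬≤. -/

import Mathlib

open MeasureTheory Real Set Filter

lemma aux_hasDeriv (β : ℝ) (hβ : β < 0) (y : ℝ) :
    HasDerivAt (fun y : ℝ => (y / β - 1 / β ^ 2) * Real.exp (β * y))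
      (y * Real.exp (β * y)) y := by
  have hβ0 : β ≠ 0 := ne_of_lt hβ
  have h1 : HasDerivAt (fun y : ℝ => y / β - 1 / β ^ 2) (1 / β) y := by
    exact ((hasDerivAt_id y).div_const β).sub_const (1 / β ^ 2)
  have h2 : HasDerivAt (fun y : ℝ => Real.exp (β * y)) (Real.exp (β * y) * β) y := by
    have h : HasDerivAt (fun y : ℝ => β * y) β y := by
      simpa using (hasDerivAt_id y).const_mul β
    exact h.exp
  have : HasDerivAt (fun y : ℝ => (y / β - 1 / β ^ 2) * Real.exp (β * y)) _ y := h1.mul h2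
  convert this using 1
  field_simp
  ring

lemma aux_tendsto (β : ℝ) (hβ : β < 0) :
    Tendsto (fun y : ℝ => (y / β - 1 / β ^ 2) * Real.exp (β * y)) atTop (nhds 0) := by
  have h1 : Tendsto (fun y : ℝ => y * Real.exp (β * y)) atTop (nhds 0) := by
    have := tendsto_rpow_mul_exp_neg_mul_atTop_nhds_zero 1 (-β) (by linarith)
    refine this.congr' ?_
    filter_upwards [eventually_ge_atTop (0:ℝ)] with y hy
    rw [Real.rpow_one]
    ring_nf
  have h2 : Tendsto (fun y : ℝ => Real.exp (β * y)) atTop (nhds 0) := by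
    apply Real.tendsto_exp_atBot.comp
    exact Tendsto.const_mul_atTop_of_neg hβ tendsto_id
  have : Tendsto (fun y : ℝ => (1 / β) * (y * Real.exp (β * y))
      - (1 / β ^ 2) * Real.exp (β * y)) atTop (nhds (1 / β * 0 - 1 / β ^ 2 * 0)) :=
    ((h1.const_mul _).sub (h2.const_mul _))
  simp only [mul_zero, sub_zero] at this
  refine this.congr fun y => by ring

lemma aux_integral (β : ℝ) (hβ : β < 0) :
    (∫ y in Ioi (0:ℝ), y * Real.exp (β * y)) = 1 / β ^ 2 := by
  have hβ0 : β ≠ 0 := ne_of_lt hβ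
  have := integral_Ioi_of_hasDerivAt_of_nonneg'
    (g := fun y : ℝ => (y / β - 1 / β ^ 2) * Real.exp (β * y))
    (g' := fun y : ℝ => y * Real.exp (β * y)) (a := 0)
    (fun y _ => aux_hasDeriv β hβ y)
    (fun y hy => mul_nonneg (le_of_lt hy) (Real.exp_pos _).le)
    (aux_tendsto β hβ)
  rw [this]
  simp

lemma aux_integrable (β : ℝ) (hβ : β < 0) :
    IntegrableOn (fun y : ℝ => y * Real.exp (β * y)) (Ioi (0:ℝ)) :=
  integrableOn_Ioi_deriv_of_nonneg' (fun y _ => aux_hasDeriv β hβ y)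
    (fun y hy => mul_nonneg (le_of_lt hy) (Real.exp_pos _).le) (aux_tendsto β hβ)

/-- For `β < 0` and `x ≥ 0`, `∫_0^∞ y e^{βy} dy = 1/β²`, and consequently
`(1/√(2πt)) ∫_0^∞ (exp(-(x-y)²/(2t)) - exp(-(x+y)²/(2t))) e^{βy} dy ≤ √(2/(πt³)) · x/β²`. -/
theorem stmt_2 (β x t : ℝ) (hβ : β < 0) (hx : 0 ≤ x) (ht : 0 < t) :
    (∫ y in Ioi (0:ℝ), y * Real.exp (β * y)) = 1 / β^2 ∧
    (Real.sqrt (2 * π * t))⁻¹ *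
        ∫ y in Ioi (0:ℝ),
          (Real.exp (-(x - y)^2 / (2*t)) - Real.exp (-(x + y)^2 / (2*t))) * Real.exp (β * y)
      ≤ Real.sqrt (2 / (π * t^3)) * (x / β^2) := by
  have hβ2 : (0:ℝ) < β ^ 2 := by nlinarith
  refine ⟨aux_integral β hβ, ?_⟩
  -- pointwise bound
  have key : ∀ y ∈ Ioi (0:ℝ),
      (Real.exp (-(x - y)^2 / (2*t)) - Real.exp (-(x + y)^2 / (2*t))) * Real.exp (β * y)
        ≤ (2 * x / t) * (y * Real.exp (β * y)) := by
    intro y hy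
    have hy0 : 0 < y := hy
    have hdiff : Real.exp (-(x - y)^2 / (2*t)) - Real.exp (-(x + y)^2 / (2*t)) ≤ 2 * x * y / t := by
      have e1 : -(x - y)^2 / (2*t) = -(x^2 + y^2) / (2*t) + x * y / t := by
        field_simp; ring
      have e2 : -(x + y)^2 / (2*t) = -(x^2 + y^2) / (2*t) + -(x * y / t) := by
        field_simp; ring
      rw [e1, e2, Real.exp_add, Real.exp_add, ← mul_sub]
      have hle : Real.exp (-(x^2 + y^2) / (2*t)) ≤ Real.exp (-(x * y / t)) := by
        apply Real.exp_le_exp.2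
        rw [show -(x * y / t) = -(2 * (x * y)) / (2 * t) by field_simp]
        exact (div_le_div_iff_of_pos_right (by linarith)).2 (by nlinarith [sq_nonneg (x - y)])
      have hsub : (0:ℝ) ≤ Real.exp (x * y / t) - Real.exp (-(x * y / t)) := by
        have : -(x * y / t) ≤ x * y / t := by
          have : 0 ≤ x * y / t := by positivity
          linarith
        have := Real.exp_le_exp.2 this
        linarith
      calc Real.exp (-(x^2 + y^2) / (2*t)) * (Real.exp (x * y / t) - Real.exp (-(x * y / t)))
          ≤ Real.exp (-(x * y / t)) * (Real.exp (x * y / t) - Real.exp (-(x * y / t))) :=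
            mul_le_mul_of_nonneg_right hle hsub
        _ = 1 - Real.exp (-(2 * x * y / t)) := by
            rw [mul_sub, ← Real.exp_add, ← Real.exp_add]; ring_nf; rw [Real.exp_zero]
        _ ≤ 2 * x * y / t := by
            have := Real.add_one_le_exp (-(2 * x * y / t))
            linarith
    calc (Real.exp (-(x - y)^2 / (2*t)) - Real.exp (-(x + y)^2 / (2*t))) * Real.exp (β * y)
        ≤ (2 * x * y / t) * Real.exp (β * y) :=
          mul_le_mul_of_nonneg_right hdiff (Real.exp_pos _).le
      _ = (2 * x / t) * (y * Real.exp (β * y)) := by ring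
  have hnonneg : ∀ y ∈ Ioi (0:ℝ),
      0 ≤ (Real.exp (-(x - y)^2 / (2*t)) - Real.exp (-(x + y)^2 / (2*t))) * Real.exp (β * y) := by
    intro y hy
    have hy0 : (0:ℝ) < y := hy
    apply mul_nonneg _ (Real.exp_pos _).le
    have h1 : -(x + y)^2 / (2*t) ≤ -(x - y)^2 / (2*t) :=
      (div_le_div_iff_of_pos_right (by linarith)).2 (by nlinarith)
    have := Real.exp_le_exp.2 h1
    linarith
  -- integrability of the majorant
  have hgint : IntegrableOn (fun y : ℝ => (2 * x / t) * (y * Real.exp (β * y))) (Ioi (0:ℝ)) :=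
    (aux_integrable β hβ).const_mul _
  have hmono : (∫ y in Ioi (0:ℝ),
      (Real.exp (-(x - y)^2 / (2*t)) - Real.exp (-(x + y)^2 / (2*t))) * Real.exp (β * y))
      ≤ ∫ y in Ioi (0:ℝ), (2 * x / t) * (y * Real.exp (β * y)) :=
    integral_mono_of_nonneg
      ((ae_restrict_iff' measurableSet_Ioi).2 (Filter.Eventually.of_forall hnonneg))
      hgint
      ((ae_restrict_iff' measurableSet_Ioi).2 (Filter.Eventually.of_forall key))
  have hval : (∫ y in Ioi (0:ℝ), (2 * x / t) * (y * Real.exp (β * y)))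
      = (2 * x / t) * (1 / β ^ 2) := by
    rw [MeasureTheory.integral_const_mul, aux_integral β hβ]
  have hsqrt_pos : (0:ℝ) < Real.sqrt (2 * π * t) := by
    apply Real.sqrt_pos.2; positivity
  have hc : Real.sqrt (2 / (π * t^3)) = (Real.sqrt (2 * π * t))⁻¹ * (2 / t) := by
    rw [show 2 / (π * t^3) = (2/t)^2 / (2 * π * t) by
      field_simp]
    rw [Real.sqrt_div (by positivity), Real.sqrt_sq (by positivity)]
    rw [div_eq_mul_inv, mul_comm]
  calc (Real.sqrt (2 * π * t))⁻¹ *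
        ∫ y in Ioi (0:ℝ),
          (Real.exp (-(x - y)^2 / (2*t)) - Real.exp (-(x + y)^2 / (2*t))) * Real.exp (β * y)
      ≤ (Real.sqrt (2 * π * t))⁻¹ * ((2 * x / t) * (1 / β ^ 2)) := by
        rw [← hval]
        exact mul_le_mul_of_nonneg_left hmono (by positivity)
    _ = Real.sqrt (2 / (π * t^3)) * (x / β^2) := by
        rw [hc]; ring
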